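/- Let A_c be a real n×n matrix and μ ∈ ℝ with μ < −1/2 and ⟨x, A_c·x⟩ ≤ μ·‖x‖² for all x ∈ ℝⁿ, let G ∈ ℝⁿ, and let T ≥ 0. Suppose e : ℝ → ℝⁿ is differentiable with e'(t) = A_c·e(t) + τ(t)·G and |τ(t)| ≤ T for all t ≥ 0. Then for all t ≥ 0, ‖e(t)‖² ≤ e^{(2μ+1)t}·‖e(0)‖² + (‖G‖²·T²)/(−(2μ+1)). In particular solutions remain bounded under bounded disturbance torques (disturbance-to-state stability). -/

import Mathlib

open Real Set

/-- Disturbance-to-state stability: if `⟨x, A_c x⟩ ≤ μ ‖x‖²` with `μ < -1/2`, and the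
disturbance torque is bounded by `T`, then along solutions of `ė = A_c e + τ(t) G`,
`‖e(t)‖² ≤ exp((2μ+1)t) ‖e(0)‖² + ‖G‖² T² / (-(2μ+1))` for all `t ≥ 0`. -/
theorem disturbance_to_state_stability
    {n : ℕ} (Ac : Matrix (Fin n) (Fin n) ℝ) (μ : ℝ) (hμ : μ < -(1 / 2))
    (hAc : ∀ x : EuclideanSpace ℝ (Fin n),
      (inner ℝ x (Matrix.toEuclideanLin Ac x) : ℝ) ≤ μ * ‖x‖ ^ 2)
    (G : EuclideanSpace ℝ (Fin n)) (T : ℝ) (hT : 0 ≤ T) (τ : ℝ → ℝ)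
    (e : ℝ → EuclideanSpace ℝ (Fin n))
    (he : ∀ t : ℝ, 0 ≤ t → HasDerivAt e (Matrix.toEuclideanLin Ac (e t) + τ t • G) t)
    (hτ : ∀ t : ℝ, 0 ≤ t → |τ t| ≤ T) :
    ∀ t : ℝ, 0 ≤ t →
      ‖e t‖ ^ 2 ≤ Real.exp ((2 * μ + 1) * t) * ‖e 0‖ ^ 2 +
        ‖G‖ ^ 2 * T ^ 2 / (-(2 * μ + 1)) := by
  intro t ht
  set K : ℝ := 2 * μ + 1 with hK
  have hKneg : K < 0 := by simp [hK]; linarith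
  set ε : ℝ := ‖G‖ ^ 2 * T ^ 2 with hε
  have hεnn : 0 ≤ ε := by positivity
  set f : ℝ → ℝ := fun s => ‖e s‖ ^ 2 with hf
  set f' : ℝ → ℝ := fun s =>
    2 * (inner ℝ (e s) (Matrix.toEuclideanLin Ac (e s) + τ s • G) : ℝ) with hf'
  have hderiv : ∀ s ∈ Ico (0 : ℝ) t, HasDerivWithinAt f (f' s) (Ici s) s := by
    intro s hs
    have h1 := (he s hs.1).inner ℝ (he s hs.1)
    have h2 : HasDerivAt (fun u => (inner ℝ (e u) (e u) : ℝ)) (f' s) s := by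
      refine h1.congr_deriv ?_
      have hcomm := real_inner_comm (e s) (Matrix.toEuclideanLin Ac (e s) + τ s • G)
      simp only [hf']
      linarith [hcomm]
    have h3 : HasDerivAt f (f' s) s := by
      apply h2.congr_deriv rfl |>.congr_of_eventuallyEq ?_
      · filter_upwards with u
        simp only [hf]; rw [real_inner_self_eq_norm_sq]
    exact h3.hasDerivWithinAt
  have hcont : ContinuousOn f (Icc 0 t) := by
    intro s hs
    exact (((he s hs.1).continuousAt.norm).pow 2).continuousWithinAt
  have bound : ∀ s ∈ Ico (0 : ℝ) t, f' s ≤ K * f s + ε := by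
    intro s hs
    have h1 : (inner ℝ (e s) (Matrix.toEuclideanLin Ac (e s)) : ℝ) ≤ μ * ‖e s‖ ^ 2 := hAc (e s)
    have h2 : (inner ℝ (e s) (τ s • G) : ℝ) = τ s * (inner ℝ (e s) G : ℝ) := by
      rw [real_inner_smul_right]
    have h3 : |(inner ℝ (e s) G : ℝ)| ≤ ‖e s‖ * ‖G‖ := abs_real_inner_le_norm _ _
    have h4 : 2 * (τ s * (inner ℝ (e s) G : ℝ)) ≤ 2 * (T * (‖e s‖ * ‖G‖)) := by
      have : τ s * (inner ℝ (e s) G : ℝ) ≤ |τ s * (inner ℝ (e s) G : ℝ)| := le_abs_self _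
      rw [abs_mul] at this
      nlinarith [abs_nonneg (τ s), hτ s hs.1, norm_nonneg (e s), norm_nonneg G,
        abs_nonneg ((inner ℝ (e s) G : ℝ))]
    have h5 : 2 * (T * (‖e s‖ * ‖G‖)) ≤ ‖e s‖ ^ 2 + T ^ 2 * ‖G‖ ^ 2 := by
      nlinarith [sq_nonneg (‖e s‖ - T * ‖G‖)]
    have : f' s = 2 * (inner ℝ (e s) (Matrix.toEuclideanLin Ac (e s)) : ℝ)
        + 2 * (τ s * (inner ℝ (e s) G : ℝ)) := by
      simp only [hf', inner_add_right, h2]; ring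
    rw [this]
    simp only [hK, hε, hf]
    nlinarith
  have key := le_gronwallBound_of_liminf_deriv_right_le hcont
    (fun x hx r hr => (hderiv x hx).liminf_right_slope_le hr)
    (le_refl (f 0)) bound t (right_mem_Icc.2 ht)
  rw [gronwallBound_of_K_ne_0 (ne_of_lt hKneg)] at key
  simp only [sub_zero] at key
  have hexp : Real.exp (K * t) ≤ 1 := by
    apply Real.exp_le_one_iff.2
    exact mul_nonpos_of_nonpos_of_nonneg (le_of_lt hKneg) ht
  have hexp0 : 0 < Real.exp (K * t) := Real.exp_pos _
  have h6 : ε / K * (Real.exp (K * t) - 1) ≤ ε / (-K) := by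
    have hK0 : K ≠ 0 := ne_of_lt hKneg
    have heq : ε / K * (Real.exp (K * t) - 1) = ε * (1 - Real.exp (K * t)) / (-K) := by
      rw [div_neg, div_mul_eq_mul_div, ← neg_div]
      congr 1
      ring
    rw [heq]
    have hKpos : (0:ℝ) < -K := by linarith
    have hnum : ε * (1 - Real.exp (K * t)) ≤ ε := by nlinarith [(Real.exp_pos (K*t)).le]
    exact (div_le_div_iff_of_pos_right hKpos).2 hnum
  calc f t ≤ f 0 * Real.exp (K * t) + ε / K * (Real.exp (K * t) - 1) := key
    _ ≤ Real.exp (K * t) * f 0 + ε / (-K) := by rw [mul_comm]; linarith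
    _ = Real.exp ((2 * μ + 1) * t) * ‖e 0‖ ^ 2 + ‖G‖ ^ 2 * T ^ 2 / (-(2 * μ + 1)) := by
      simp [hK, hε, hf]
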